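/- Suppose m > 3 and let ν^1, …, ν^m ∈ Λ²(ℝ^m) be arbitrary 2-vectors. If Σ_i ν^i ∧ θ_{ijk} = 0 in Λ^{m−1}(ℝ^m) for all j, k ∈ {1,…,m}, then ν^i = 0 for every i. -/

import Mathlib

open ExteriorAlgebra

/-- The degree-1 element θ^i : the i-th standard basis vector of ℝ^m. -/
noncomputable def θ (m : ℕ) (i : Fin m) : ExteriorAlgebra ℝ (Fin m → ℝ) :=
  ExteriorAlgebra.ι ℝ (Pi.single i 1)

/-- The volume element σ₀ = θ^1 ∧ ⋯ ∧ θ^m. -/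
noncomputable def σ₀ (m : ℕ) : ExteriorAlgebra ℝ (Fin m → ℝ) :=
  ((List.finRange m).map (θ m)).prod

/-- Left interior product with the dual basis covector ε^i. -/
noncomputable def contr (m : ℕ) (i : Fin m) (x : ExteriorAlgebra ℝ (Fin m → ℝ)) :
    ExteriorAlgebra ℝ (Fin m → ℝ) :=
  CliffordAlgebra.contractLeft (LinearMap.proj i) x

/-- θ_{i₁⋯i_p} : iterated contraction of σ₀ by ε^{i₁}, …, ε^{i_p} (in this order). -/
noncomputable def θdown (m : ℕ) (l : List (Fin m)) : ExteriorAlgebra ℝ (Fin m → ℝ) :=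
  l.foldl (fun x i => contr m i x) (σ₀ m)

namespace S12
variable {m : ℕ}

noncomputable abbrev d (m : ℕ) (i : Fin m) :
    ExteriorAlgebra ℝ (Fin m → ℝ) →ₗ[ℝ] ExteriorAlgebra ℝ (Fin m → ℝ) :=
  CliffordAlgebra.contractLeft (LinearMap.proj i)

lemma d_one (i : Fin m) : d m i 1 = 0 := CliffordAlgebra.contractLeft_one _ _

lemma d_θ_mul (i j : Fin m) (x : ExteriorAlgebra ℝ (Fin m → ℝ)) :
    d m i (θ m j * x) = (if i = j then x else 0) - θ m j * d m i x := by
  rw [θ, show (ExteriorAlgebra.ι ℝ (Pi.single j 1)) =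
    CliffordAlgebra.ι (0 : QuadraticForm ℝ (Fin m → ℝ)) (Pi.single j 1) from rfl,
    show d m i = CliffordAlgebra.contractLeft (LinearMap.proj i) from rfl,
    CliffordAlgebra.contractLeft_ι_mul]
  congr 1
  simp [Pi.single_apply, ite_smul]

lemma θ_sq (a : Fin m) : θ m a * θ m a = 0 := ι_sq_zero _

lemma θ_anticomm (a b : Fin m) : θ m a * θ m b = -(θ m b * θ m a) := by
  have h := ι_add_mul_swap (R := ℝ) (Pi.single a (1:ℝ) : Fin m → ℝ) (Pi.single b 1)
  rw [θ, θ, eq_neg_iff_add_eq_zero, h]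

/-- words -/
noncomputable def w (m : ℕ) (l : List (Fin m)) : ExteriorAlgebra ℝ (Fin m → ℝ) :=
  (l.map (θ m)).prod

lemma w_nil : w m [] = 1 := rfl
lemma w_cons (i : Fin m) (l : List (Fin m)) : w m (i :: l) = θ m i * w m l := by
  simp [w]

lemma d_w_of_not_mem (i : Fin m) (l : List (Fin m)) (h : i ∉ l) : d m i (w m l) = 0 := by
  induction l with
  | nil => simpa [w_nil] using d_one i
  | cons j t ih =>
      have hij : i ≠ j := fun e => h (e ▸ (List.mem_cons_self : j ∈ j :: t))
      have hit : i ∉ t := fun e => h (List.mem_cons_of_mem _ e)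
      rw [w_cons, d_θ_mul, if_neg hij, ih hit, mul_zero, zero_sub, neg_zero]

lemma θ_mul_w_of_mem (a : Fin m) (l : List (Fin m)) (h : a ∈ l) : θ m a * w m l = 0 := by
  induction l with
  | nil => simp at h
  | cons j t ih =>
      rw [w_cons, ← mul_assoc]
      by_cases hij : a = j
      · subst hij; rw [θ_sq, zero_mul]
      · have hat : a ∈ t := by
          rcases List.mem_cons.mp h with h1 | h2
          · exact absurd h1 hij
          · exact h2
        rw [θ_anticomm a j, neg_mul, mul_assoc, ih hat, mul_zero, neg_zero]

/-- iterated contraction from an arbitrary start -/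
noncomputable def cl (m : ℕ) (l : List (Fin m)) (x : ExteriorAlgebra ℝ (Fin m → ℝ)) :
    ExteriorAlgebra ℝ (Fin m → ℝ) :=
  l.foldl (fun x i => d m i x) x

lemma cl_nil (x : ExteriorAlgebra ℝ (Fin m → ℝ)) : cl m [] x = x := rfl
lemma cl_cons (i : Fin m) (l : List (Fin m)) (x) : cl m (i :: l) x = cl m l (d m i x) := rfl

lemma cl_zero (l : List (Fin m)) : cl m l 0 = 0 := by
  induction l with
  | nil => rfl
  | cons i t ih => rw [cl_cons, map_zero, ih]

lemma cl_w_self (l : List (Fin m)) (h : l.Nodup) : cl m l (w m l) = 1 := by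
  induction l with
  | nil => rfl
  | cons i t ih =>
      have hit : i ∉ t := (List.nodup_cons.mp h).1
      have ht : t.Nodup := (List.nodup_cons.mp h).2
      rw [cl_cons, w_cons, d_θ_mul, if_pos rfl, d_w_of_not_mem i t hit, mul_zero, sub_zero, ih ht]

lemma θdown_eq_cl (l : List (Fin m)) : θdown m l = cl m l (σ₀ m) := rfl
lemma σ₀_eq_w : σ₀ m = w m (List.finRange m) := rfl

lemma σ₀_ne_zero : σ₀ m ≠ 0 := by
  intro h0
  have h1 : cl m (List.finRange m) (σ₀ m) = 1 := cl_w_self _ (List.nodup_finRange m)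
  rw [h0, cl_zero] at h1
  exact one_ne_zero h1.symm

lemma θdown_concat (l : List (Fin m)) (i : Fin m) :
    θdown m (l ++ [i]) = d m i (θdown m l) := by
  rw [θdown_eq_cl, θdown_eq_cl, cl, cl, List.foldl_append]
  rfl

lemma θ_mul_θdown_of_not_mem (b : Fin m) (l : List (Fin m)) (h : b ∉ l) :
    θ m b * θdown m l = 0 := by
  induction l using List.reverseRecOn with
  | nil =>
      rw [θdown_eq_cl, cl_nil, σ₀_eq_w]
      exact θ_mul_w_of_mem b _ (List.mem_finRange b)
  | append_singleton t i ih =>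
      have hbi : b ≠ i := fun e => h (by simp [e])
      have hbt : b ∉ t := fun e => h (by simp [e])
      have key := d_θ_mul b i (θ m b * θdown m t)
      -- instead: use d_θ_mul with j := b?  we need θ b * d i X = ...
      have h2 := d_θ_mul i b (θdown m t)
      -- h2 : d i (θ b * θdown t) = (if i = b then _ else 0) - θ b * d i (θdown t)
      rw [θdown_concat]
      have : θ m b * d m i (θdown m t) =
          (if i = b then θdown m t else 0) - d m i (θ m b * θdown m t) := by
        rw [h2]; abel
      rw [this, if_neg (Ne.symm hbi), ih hbt, map_zero, zero_sub, neg_zero]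

lemma θ_mul_θdown_concat_self (a : Fin m) (l : List (Fin m)) (h : a ∉ l) :
    θ m a * θdown m (l ++ [a]) = θdown m l := by
  rw [θdown_concat]
  have h2 := d_θ_mul a a (θdown m l)
  have : θ m a * d m a (θdown m l) =
      (if a = a then θdown m l else 0) - d m a (θ m a * θdown m l) := by
    rw [h2]; abel
  rw [this, if_pos rfl, θ_mul_θdown_of_not_mem a l h, map_zero, sub_zero]

-- triples as explicit contractions
lemma θdown_triple (x y z : Fin m) :
    θdown m [x, y, z] = d m z (d m y (d m x (σ₀ m))) := rfl
lemma θdown_pair (x y : Fin m) : θdown m [x, y] = d m y (d m x (σ₀ m)) := rfl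
lemma θdown_single (x : Fin m) : θdown m [x] = d m x (σ₀ m) := rfl

lemma d_comm (p q : Fin m) (x : ExteriorAlgebra ℝ (Fin m → ℝ)) :
    d m p (d m q x) = -d m q (d m p x) :=
  CliffordAlgebra.contractLeft_comm _ _ _

lemma d_d_self (p : Fin m) (x : ExteriorAlgebra ℝ (Fin m → ℝ)) :
    d m p (d m p x) = 0 :=
  CliffordAlgebra.contractLeft_contractLeft _ _

lemma θdown_swap12 (x y z : Fin m) : θdown m [x, y, z] = -θdown m [y, x, z] := by
  rw [θdown_triple, θdown_triple, d_comm y x, map_neg]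

lemma θdown_swap23 (x y z : Fin m) : θdown m [x, y, z] = -θdown m [x, z, y] := by
  rw [θdown_triple, θdown_triple, d_comm z y]

lemma θdown_pair_swap (x y : Fin m) : θdown m [x, y] = -θdown m [y, x] := by
  rw [θdown_pair, θdown_pair, d_comm y x]

lemma θdown_dup12 (x z : Fin m) : θdown m [x, x, z] = 0 := by
  rw [θdown_triple, d_d_self, map_zero]
lemma θdown_dup23 (x y : Fin m) : θdown m [x, y, y] = 0 := by
  rw [θdown_triple, d_d_self]
lemma θdown_dup13 (x y : Fin m) : θdown m [x, y, x] = 0 := by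
  rw [θdown_triple, d_comm x y, d_d_self, map_zero, neg_zero]

-- peels
lemma P1 (x : Fin m) : θ m x * θdown m [x] = σ₀ m := by
  exact θ_mul_θdown_concat_self x [] (by simp)
lemma P2 (x y : Fin m) (h : y ≠ x) : θ m y * θdown m [x, y] = θdown m [x] := by
  simpa using θ_mul_θdown_concat_self y [x] (by simp [h])
lemma P3 (x y z : Fin m) (hzx : z ≠ x) (hzy : z ≠ y) :
    θ m z * θdown m [x, y, z] = θdown m [x, y] := by
  simpa using θ_mul_θdown_concat_self z [x, y] (by simp [hzx, hzy])

noncomputable def dl (x y : Fin m) : ℝ := if x = y then 1 else 0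

noncomputable def E (l a b i j k : Fin m) : ℝ :=
  dl l i * dl a j * dl b k + dl l j * dl a k * dl b i + dl l k * dl a i * dl b j
  - dl l i * dl a k * dl b j - dl l j * dl a i * dl b k - dl l k * dl a j * dl b i

set_option maxHeartbeats 1000000 in
lemma ML (l a b i j k : Fin m) :
    θ m l * (θ m a * (θ m b * θdown m [i, j, k])) = E l a b i j k • σ₀ m := by
  by_cases hij : i = j
  · subst hij
    have hE : E l a b i i k = 0 := by unfold E; ring
    rw [θdown_dup12, hE, zero_smul, mul_zero, mul_zero, mul_zero]
  by_cases hjk : j = k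
  · subst hjk
    have hE : E l a b i j j = 0 := by unfold E; ring
    rw [θdown_dup23, hE, zero_smul, mul_zero, mul_zero, mul_zero]
  by_cases hik : i = k
  · subst hik
    have hE : E l a b i j i = 0 := by unfold E; ring
    rw [θdown_dup13, hE, zero_smul, mul_zero, mul_zero, mul_zero]
  -- i, j, k pairwise distinct
  have hji := Ne.symm hij
  have hkj := Ne.symm hjk
  have hki := Ne.symm hik
  by_cases hb : b = k
  · subst hb
    rw [P3 i j b hki hkj]
    by_cases ha : a = j
    · subst ha
      rw [P2 i a hji]
      by_cases hl : l = i
      · subst hl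
        rw [P1 l]
        simp [E, dl, hij, hjk, hik, hji, hkj, hki]
      · rw [θ_mul_θdown_of_not_mem l [i] (by simp [hl])]
        simp [E, dl, hij, hjk, hik, hji, hkj, hki, hl]
    by_cases ha2 : a = i
    · subst ha2
      rw [θdown_pair_swap a j]
      simp only [mul_neg, neg_neg]
      rw [P2 j a hij]
      by_cases hl : l = j
      · subst hl
        rw [P1 l]
        simp [E, dl, hij, hjk, hik, hji, hkj, hki]
      · rw [θ_mul_θdown_of_not_mem l [j] (by simp [hl])]
        simp [E, dl, hij, hjk, hik, hji, hkj, hki, hl]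
    · rw [θ_mul_θdown_of_not_mem a [i, j] (by simp [ha, ha2])]
      simp [E, dl, hij, hjk, hik, hji, hkj, hki, ha, ha2]
  by_cases hb2 : b = j
  · subst hb2
    rw [θdown_swap23 i b k]
    simp only [mul_neg, neg_neg]
    rw [P3 i k b hji hjk]
    by_cases ha : a = i
    · subst ha
      rw [θdown_pair_swap a k]
      simp only [mul_neg, neg_neg]
      rw [P2 k a hik]
      by_cases hl : l = k
      · subst hl
        rw [P1 l]
        simp [E, dl, hij, hjk, hik, hji, hkj, hki]
      · rw [θ_mul_θdown_of_not_mem l [k] (by simp [hl])]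
        simp [E, dl, hij, hjk, hik, hji, hkj, hki, hl]
    by_cases ha2 : a = k
    · subst ha2
      rw [P2 i a hki]
      by_cases hl : l = i
      · subst hl
        rw [P1 l]
        simp [E, dl, hij, hjk, hik, hji, hkj, hki]
      · rw [θ_mul_θdown_of_not_mem l [i] (by simp [hl])]
        simp [E, dl, hij, hjk, hik, hji, hkj, hki, hl]
    · rw [θ_mul_θdown_of_not_mem a [i, k] (by simp [ha, ha2])]
      simp [E, dl, hij, hjk, hik, hji, hkj, hki, ha, ha2]
  by_cases hb3 : b = i
  · subst hb3
    have hperm : θdown m [b, j, k] = θdown m [j, k, b] := by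
      rw [θdown_swap12 b j k, θdown_swap23 j b k, neg_neg]
    rw [hperm, P3 j k b hij hik]
    by_cases ha : a = j
    · subst ha
      rw [θdown_pair_swap a k]
      simp only [mul_neg, neg_neg]
      rw [P2 k a hjk]
      by_cases hl : l = k
      · subst hl
        rw [P1 l]
        simp [E, dl, hij, hjk, hik, hji, hkj, hki]
      · rw [θ_mul_θdown_of_not_mem l [k] (by simp [hl])]
        simp [E, dl, hij, hjk, hik, hji, hkj, hki, hl]
    by_cases ha2 : a = k
    · subst ha2
      rw [P2 j a hkj]
      by_cases hl : l = j
      · subst hl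
        rw [P1 l]
        simp [E, dl, hij, hjk, hik, hji, hkj, hki]
      · rw [θ_mul_θdown_of_not_mem l [j] (by simp [hl])]
        simp [E, dl, hij, hjk, hik, hji, hkj, hki, hl]
    · rw [θ_mul_θdown_of_not_mem a [j, k] (by simp [ha, ha2])]
      simp [E, dl, hij, hjk, hik, hji, hkj, hki, ha, ha2]
  · rw [θ_mul_θdown_of_not_mem b [i, j, k] (by simp [hb, hb2, hb3])]
    simp [E, dl, hij, hjk, hik, hji, hkj, hki, hb, hb2, hb3]

lemma ι_eq_sum (u : Fin m → ℝ) : ExteriorAlgebra.ι ℝ u = ∑ a, u a • θ m a := by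
  have hu : u = ∑ a, u a • (Pi.single a 1 : Fin m → ℝ) := by
    funext x
    simp [Finset.sum_apply, Pi.single_apply]
  conv_lhs => rw [hu]
  rw [map_sum]
  exact Finset.sum_congr rfl fun a _ => by rw [map_smul, θ]

lemma exists_matrix (x : ExteriorAlgebra ℝ (Fin m → ℝ)) (hx : x ∈ ⋀[ℝ]^2 (Fin m → ℝ)) :
    ∃ N : Fin m → Fin m → ℝ, x = ∑ a, ∑ b, N a b • (θ m a * θ m b) := by
  rw [exteriorPower, pow_two] at hx
  refine Submodule.mul_induction_on hx ?_ ?_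
  · rintro p ⟨u, rfl⟩ q ⟨v, rfl⟩
    refine ⟨fun a b => u a * v b, ?_⟩
    rw [ι_eq_sum u, ι_eq_sum v, Finset.sum_mul]
    refine Finset.sum_congr rfl fun a _ => ?_
    rw [Finset.mul_sum]
    refine Finset.sum_congr rfl fun b _ => ?_
    rw [smul_mul_assoc, mul_smul_comm, smul_smul]
  · rintro y z ⟨Ny, hy⟩ ⟨Nz, hz⟩
    refine ⟨Ny + Nz, ?_⟩
    rw [hy, hz, ← Finset.sum_add_distrib]
    refine Finset.sum_congr rfl fun a _ => ?_
    rw [← Finset.sum_add_distrib]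
    refine Finset.sum_congr rfl fun b _ => ?_
    rw [← add_smul]
    rfl
end S12

set_option maxHeartbeats 2000000 in
/-- If m > 3 and ν^1,…,ν^m ∈ Λ²(ℝ^m) satisfy Σ_i ν^i ∧ θ_{ijk} = 0 for all j,k, then every
ν^i vanishes. -/
theorem stmt12 (m : ℕ) (hm : 3 < m) (ν : Fin m → ExteriorAlgebra ℝ (Fin m → ℝ))
    (hν : ∀ i, ν i ∈ ⋀[ℝ]^2 (Fin m → ℝ))
    (h : ∀ j k : Fin m, ∑ i : Fin m, ν i * θdown m [i, j, k] = 0) :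
    ∀ i, ν i = 0 := by
  classical
  choose N hN using fun i => S12.exists_matrix (ν i) (hν i)
  -- the scalar equations
  have key : ∀ j k l : Fin m, ∑ i, ∑ a, ∑ b, N i a b * S12.E l a b i j k = 0 := by
    intro j k l
    have h0 : ∑ i : Fin m, θ m l * (ν i * θdown m [i, j, k]) = 0 := by
      rw [← Finset.mul_sum, h j k, mul_zero]
    have h1 : ∀ i : Fin m, θ m l * (ν i * θdown m [i, j, k])
        = (∑ a, ∑ b, N i a b * S12.E l a b i j k) • σ₀ m := by
      intro i
      rw [hN i, Finset.sum_mul, Finset.mul_sum, Finset.sum_smul]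
      refine Finset.sum_congr rfl fun a _ => ?_
      rw [Finset.sum_mul, Finset.mul_sum, Finset.sum_smul]
      refine Finset.sum_congr rfl fun b _ => ?_
      rw [smul_mul_assoc, mul_smul_comm, mul_assoc, S12.ML l a b i j k, smul_smul]
    have h2 : (∑ i, ∑ a, ∑ b, N i a b * S12.E l a b i j k) • σ₀ m = 0 := by
      rw [Finset.sum_smul, ← h0]
      exact Finset.sum_congr rfl fun i _ => (h1 i).symm
    rcases smul_eq_zero.mp h2 with h3 | h3
    · exact h3
    · exact absurd h3 S12.σ₀_ne_zero
  -- step A : off-diagonal coefficients vanish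
  have stepA : ∀ c j k : Fin m, c ≠ j → c ≠ k → N c j k - N c k j = 0 := by
    intro c j k hcj hck
    have hk := key j k c
    simp only [S12.E, S12.dl, if_neg hcj, if_neg hck] at hk
    simp only [mul_ite, ite_mul, mul_one, mul_zero, one_mul, zero_mul, mul_add, mul_sub,
      add_mul, sub_mul, zero_add, add_zero, zero_sub, sub_zero,
      Finset.sum_add_distrib, Finset.sum_sub_distrib,
      Finset.sum_ite_eq, Finset.sum_ite_eq', Finset.mem_univ, if_true,
      Finset.sum_const_zero, neg_zero] at hk
    linarith
  -- step B : trace equations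
  have stepB : ∀ j k : Fin m, k ≠ j →
      (N k j k - N k k j) + (∑ i, (N i i j - N i j i)) = 0 := by
    intro j k hkj
    have hk := key j k k
    simp only [S12.E, S12.dl, if_neg hkj, if_pos rfl] at hk
    simp only [mul_ite, ite_mul, mul_one, mul_zero, one_mul, zero_mul, mul_add, mul_sub,
      add_mul, sub_mul, zero_add, add_zero, zero_sub, sub_zero,
      Finset.sum_add_distrib, Finset.sum_sub_distrib,
      Finset.sum_ite_eq, Finset.sum_ite_eq', Finset.mem_univ, if_true,
      Finset.sum_const_zero, neg_zero] at hk
    rw [Finset.sum_sub_distrib]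
    linarith
  -- the diagonal-type coefficients also vanish
  have stepC : ∀ j k : Fin m, k ≠ j → N k k j - N k j k = 0 := by
    intro j k hkj
    set S : ℝ := ∑ i, (N i i j - N i j i) with hS
    have hconst : ∀ k : Fin m, k ≠ j → N k k j - N k j k = S := by
      intro k' hk'
      have := stepB j k' hk'
      linarith
    have hm4 : (4 : ℝ) ≤ (m : ℝ) := by exact_mod_cast hm
    have hS0 : S = 0 := by
      have e1 : S = ∑ i, (if i = j then 0 else S) := by
        rw [hS]
        refine Finset.sum_congr rfl fun i _ => ?_
        by_cases hi : i = j
        · rw [if_pos hi, hi]; ring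
        · rw [if_neg hi]
          have := hconst i hi
          linarith
      have e2 : ∑ i : Fin m, (if i = j then 0 else S) =
          (∑ i : Fin m, S) - (∑ i : Fin m, if i = j then S else 0) := by
        rw [← Finset.sum_sub_distrib]
        refine Finset.sum_congr rfl fun i _ => ?_
        by_cases hi : i = j <;> simp [hi]
      have e3 : (∑ _i : Fin m, S) = (m : ℝ) * S := by
        rw [Finset.sum_const, Finset.card_univ, Fintype.card_fin, nsmul_eq_mul]
      have e4 : (∑ i : Fin m, if i = j then S else 0) = S := by
        rw [Finset.sum_ite_eq' Finset.univ j (fun _ => S), if_pos (Finset.mem_univ j)]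
      have hSm : S = (m : ℝ) * S - S := by linarith
      have h2 : ((m : ℝ) - 2) * S = 0 := by linear_combination (-1 : ℝ) * hSm
      rcases mul_eq_zero.mp h2 with h3 | h3
      · linarith
      · exact h3
    have := hconst k hkj
    linarith
  -- all antisymmetrized coefficients vanish
  have hC : ∀ i a b : Fin m, N i a b - N i b a = 0 := by
    intro i a b
    by_cases hab : a = b
    · rw [hab]; ring
    by_cases hia : i = a
    · subst hia
      exact stepC b i (hab)
    by_cases hib : i = b
    · subst hib
      have := stepC a i (Ne.symm hab)
      linarith
    · exact stepA i a b hia hib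
  -- reconstruct
  intro i
  have expand := hN i
  have swap : (∑ a, ∑ b, N i a b • (θ m a * θ m b))
      = ∑ a, ∑ b, (-(N i b a)) • (θ m a * θ m b) := by
    rw [Finset.sum_comm]
    refine Finset.sum_congr rfl fun a _ => ?_
    refine Finset.sum_congr rfl fun b _ => ?_
    rw [S12.θ_anticomm, smul_neg, ← neg_smul]
  have h3 : ν i + ν i = 0 := by
    nth_rewrite 1 [expand]
    nth_rewrite 1 [expand.trans swap]
    rw [← Finset.sum_add_distrib]
    refine Finset.sum_eq_zero fun a _ => ?_
    rw [← Finset.sum_add_distrib]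
    refine Finset.sum_eq_zero fun b _ => ?_
    rw [← add_smul]
    have hab := hC i a b
    have hz : N i a b + -(N i b a) = 0 := by linarith
    rw [hz, zero_smul]
  have h4 : (2 : ℝ) • ν i = 0 := by
    rw [two_smul]; exact h3
  rcases smul_eq_zero.mp h4 with h5 | h5
  · norm_num at h5
  · exact h5
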